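/- Let l be a prime and let P = P_1 · P_2 · ⋯ · P_s be a monic polynomial in ℤ[x] where the P_i are monic and pairwise coprime in ℚ[x]; set K_i = ∏_{j≠i} P_j, choose g_i ∈ ℚ[x] with ∑_{i=1}^s g_i K_i = 1, and let s₁ ≥ 0 be an integer such that every coefficient of every l^{s₁}·g_i lies in ℤ localized at l. Then for every endomorphism π of a finite free module T over the l-adic integers ℤ_l whose characteristic polynomial is the image of P, one has l^{s₁}·T ⊆ K_1(π)(T) + ⋯ + K_s(π)(T) ⊆ T, and the sum K_1(π)(T) + ⋯ + K_s(π)(T) is a direct sum. -/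

import Mathlib

open Polynomial

/-- **Sandwich estimate for the decomposition at a fixed prime `l`.**
Let `P = P₁ ⋯ P_s` with the `P i` monic in `ℤ[x]` and pairwise coprime over `ℚ`,
`K i = ∏_{j ≠ i} P j`, and choose Bezout coefficients `g i ∈ ℚ[x]` with `∑ g i * K i = 1`.
If `s₁` is such that all coefficients of all `l^{s₁} • g i` are `l`-integral, then for every
endomorphism `π` of a finite free `ℤ_l`-module `T` with characteristic polynomial the image
of `P`, one has `l^{s₁}·T ⊆ ⊕ K i (π)(T) ⊆ T`, and the sum of the `K i (π)(T)` is direct. -/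
theorem sandwich_estimate_fixed_l (l : ℕ) [Fact l.Prime] (s : ℕ)
    (P : Fin s → Polynomial ℤ) (hmonic : ∀ i, (P i).Monic)
    (hcop : ∀ i j, i ≠ j →
      IsCoprime ((P i).map (Int.castRingHom ℚ)) ((P j).map (Int.castRingHom ℚ)))
    (K : Fin s → Polynomial ℤ)
    (hK : ∀ i, K i = ∏ j ∈ Finset.univ.erase i, P j)
    (g : Fin s → Polynomial ℚ)
    (hg : ∑ i, g i * (K i).map (Int.castRingHom ℚ) = 1)
    (s₁ : ℕ)
    (hs₁ : ∀ i m, ‖((((l : ℚ) ^ s₁ * (g i).coeff m : ℚ)) : ℚ_[l])‖ ≤ 1) :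
    ∀ (T : Type) [AddCommGroup T] [Module ℤ_[l] T] [Module.Finite ℤ_[l] T]
      [Module.Free ℤ_[l] T] (π : T →ₗ[ℤ_[l]] T),
      π.charpoly = (∏ i, P i).map (Int.castRingHom ℤ_[l]) →
      (∀ x : T, ((l : ℤ_[l]) ^ s₁) • x ∈
        ⨆ i, LinearMap.range (Polynomial.aeval π (K i))) ∧
      iSupIndep (fun i => LinearMap.range (Polynomial.aeval π (K i))) := by
  classical
  intro T _ _ _ _ π hchar
  set φ : ℤ_[l] →+* ℚ_[l] := PadicInt.Coe.ringHom with hφdef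
  have hφ : Function.Injective φ := Subtype.coe_injective
  have hρ : (Rat.castHom ℚ_[l]).comp (Int.castRingHom ℚ) = Int.castRingHom ℚ_[l] :=
    RingHom.ext_int _ _
  have hφZ : φ.comp (Int.castRingHom ℤ_[l]) = Int.castRingHom ℚ_[l] :=
    RingHom.ext_int _ _
  -- lift the polynomials l^{s₁} g i to ℤ_[l][X]
  have lift : ∀ i, ∃ H : Polynomial ℤ_[l],
      H.map φ = (C ((l:ℚ)^s₁) * g i).map (Rat.castHom ℚ_[l]) := by
    intro i
    set h := (C ((l:ℚ)^s₁) * g i).map (Rat.castHom ℚ_[l]) with hh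
    have hc : ∀ m, ‖h.coeff m‖ ≤ 1 := by
      intro m
      have : h.coeff m = ((((l : ℚ) ^ s₁ * (g i).coeff m : ℚ)) : ℚ_[l]) := by
        rw [hh, coeff_map, coeff_C_mul]; rfl
      rw [this]; exact hs₁ i m
    refine ⟨∑ m ∈ h.support, monomial m (⟨h.coeff m, hc m⟩ : ℤ_[l]), ?_⟩
    rw [Polynomial.map_sum]
    conv_rhs => rw [h.as_sum_support]
    refine Finset.sum_congr rfl fun m _ => ?_
    refine (map_monomial φ).trans ?_
    rfl
  choose H hH using lift
  -- key identity in ℤ_[l][X]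
  have key : (∑ i, H i * (K i).map (Int.castRingHom ℤ_[l])) = C ((l:ℤ_[l])^s₁) := by
    apply Polynomial.map_injective φ hφ
    rw [Polynomial.map_sum]
    have : ∀ i, (H i * (K i).map (Int.castRingHom ℤ_[l])).map φ
        = ((C ((l:ℚ)^s₁) * (g i * (K i).map (Int.castRingHom ℚ)))).map (Rat.castHom ℚ_[l]) := by
      intro i
      rw [Polynomial.map_mul, hH, map_map, hφZ, ← hρ, ← map_map,
        ← Polynomial.map_mul, mul_assoc]
    rw [Finset.sum_congr rfl fun i _ => this i, ← Polynomial.map_sum,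
      ← Finset.mul_sum, hg, mul_one, Polynomial.map_C, Polynomial.map_C]
    push_cast
    simp [map_pow]
  -- aeval facts
  have haevalZ : ∀ p : Polynomial ℤ,
      aeval π (p.map (Int.castRingHom ℤ_[l])) = aeval π p := by
    intro p
    rw [← algebraMap_int_eq, aeval_map_algebraMap]
  have hCH : (aeval π (∏ i, P i) : Module.End ℤ_[l] T) = 0 := by
    rw [← haevalZ, ← hchar]
    exact π.aeval_self_charpoly
  have hPK : ∀ i, P i * K i = ∏ j, P j := by
    intro i
    rw [hK]
    exact Finset.mul_prod_erase _ _ (Finset.mem_univ i)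
  have mulapp : ∀ (p q : Polynomial ℤ_[l]) (x : T),
      aeval π (p * q) x = aeval π p (aeval π q x) := by
    intro p q x; rw [map_mul]; rfl
  have mulappZ : ∀ (p q : Polynomial ℤ) (x : T),
      aeval π (p * q) x = aeval π p (aeval π q x) := by
    intro p q x; rw [map_mul]; rfl
  -- main scalar identity applied to x
  have main : ∀ x : T, ((l : ℤ_[l]) ^ s₁) • x
      = ∑ i, aeval π (H i) (aeval π (K i) x) := by
    intro x
    have := congrArg (fun p => aeval π p x) key
    rw [aeval_C, Module.algebraMap_end_apply] at this
    rw [← this, map_sum, LinearMap.sum_apply]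
    refine Finset.sum_congr rfl fun i _ => ?_
    rw [mulapp, haevalZ]
  -- j ≠ i ⇒ K j has P i as a factor
  have hfac : ∀ i j : Fin s, j ≠ i → ∃ M : Polynomial ℤ, K j = P i * M := by
    intro i j hij
    refine ⟨∏ m ∈ (Finset.univ.erase j).erase i, P m, ?_⟩
    rw [hK]
    exact (Finset.mul_prod_erase _ _ (by simp [Finset.mem_erase, Ne.symm hij])).symm
  constructor
  · intro x
    rw [main x]
    refine Submodule.sum_mem _ fun i _ => ?_
    refine Submodule.mem_iSup_of_mem i ?_
    have : aeval π (H i) (aeval π (K i) x)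
        = aeval π (K i) (aeval π (H i) x) := by
      rw [← haevalZ (K i), ← mulapp, mul_comm, mulapp, haevalZ]
    rw [this]
    exact LinearMap.mem_range_self _ _
  · rw [iSupIndep_def]
    intro i
    rw [Submodule.disjoint_def]
    intro x hx1 hx2
    obtain ⟨y, rfl⟩ := hx1
    set x := aeval π (K i) y
    have hPi : aeval π (P i) x = 0 := by
      show aeval π (P i) (aeval π (K i) y) = 0
      rw [← mulappZ, hPK, hCH]; rfl
    have hKi : aeval π (K i) x = 0 := by
      have hle : (⨆ j, ⨆ (_ : j ≠ i), LinearMap.range (aeval π (K j)))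
          ≤ LinearMap.ker (aeval π (K i)) := by
        refine iSup₂_le fun j hj => ?_
        rintro _ ⟨z, rfl⟩
        obtain ⟨M, hM⟩ := hfac j i (Ne.symm hj)
        simp only [LinearMap.mem_ker]
        have h2 : aeval π (K i) (aeval π (K j) z)
            = aeval π M (aeval π (∏ m, P m) z) := by
          rw [hM, mul_comm (P j) M, mulappZ, ← mulappZ (P j) (K j) z, hPK]
        rw [h2, hCH]
        simp
      exact hle hx2
    have hzero : ((l : ℤ_[l]) ^ s₁) • x = 0 := by
      rw [main x]
      refine Finset.sum_eq_zero fun j _ => ?_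
      by_cases hji : j = i
      · subst hji; rw [hKi]; simp
      · obtain ⟨M, hM⟩ := hfac i j hji
        rw [hM, mul_comm (P i) M, mulappZ, hPi]
        simp
    have hl : ((l : ℤ_[l]) ^ s₁) ≠ 0 :=
      pow_ne_zero _ (Nat.cast_ne_zero.mpr (Fact.out (p := l.Prime)).ne_zero)
    exact (smul_eq_zero.mp hzero).resolve_left hl
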